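/- Let 3 ≤ k ≤ n−2. If x ∈ 𝔅^{(∅)} satisfies ∂_j(x) = 0 for every j ∈ {1,…,n}, then x = 0. Equivalently: if c assigns a real number c_J to every nonfrozen k-element subset J of {1,…,n}, and for every j ∈ {1,…,n} and every (k−1)-element subset K of {1,…,n}∖{j} that is nonfrozen in {1,…,n}∖{j} one has Σ c_J = 0, the sum over all nonfrozen k-element subsets J with ∂_j(J) = K, then c_J = 0 for all J. -/

import Mathlib

open Finset

/-- Cyclic successor in `Fin n`. -/
def csucc {n : ℕ} (x : Fin n) : Fin n :=
  ⟨(x.val + 1) % n, Nat.mod_lt _ (Nat.lt_of_le_of_lt (Nat.zero_le _) x.isLt)⟩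

/-- Cyclic predecessor in `Fin n`. -/
def cpred {n : ℕ} (x : Fin n) : Fin n :=
  ⟨(x.val + (n - 1)) % n, Nat.mod_lt _ (Nat.lt_of_le_of_lt (Nat.zero_le _) x.isLt)⟩

/-- The cyclic interval `[i, j]` in `Fin n`. -/
def cInterval {n : ℕ} (i j : Fin n) : Finset (Fin n) :=
  univ.filter fun x => (x - i).val ≤ (j - i).val

/-- `K` is frozen in `S` if its elements are consecutive in the cyclic order induced
on `S` from `(1,2,…,n)`, i.e. `K` is the intersection of `S` with a cyclic interval. -/
def FrozenIn {n : ℕ} (S K : Finset (Fin n)) : Prop :=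
  ∃ i j : Fin n, K = S ∩ cInterval i j

instance {n : ℕ} (S K : Finset (Fin n)) : Decidable (FrozenIn S K) :=
  inferInstanceAs (Decidable (∃ i j : Fin n, K = S ∩ cInterval i j))

/-- The first element of `K` met when reading `j, j+1, j+2, …` cyclically
(`j` itself if `j ∈ K`); junk value `j` if `K = ∅`. -/
def nextIn {n : ℕ} (K : Finset (Fin n)) (j : Fin n) : Fin n :=
  if h : (univ.filter fun r : Fin n => j + r ∈ K).Nonempty then
    j + (univ.filter fun r : Fin n => j + r ∈ K).min' h
  else j

/-- The cyclic predecessor of `x` in `S`: the first element of `S` met when reading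
`x−1, x−2, …` cyclically; junk value `x` if `S = ∅`. -/
def prevIn {n : ℕ} (S : Finset (Fin n)) (x : Fin n) : Fin n :=
  if h : (univ.filter fun r : Fin n => cpred x - r ∈ S).Nonempty then
    cpred x - (univ.filter fun r : Fin n => cpred x - r ∈ S).min' h
  else x

/-- `∂_j(K) = K ∖ {ℓ}`, where `ℓ = j` if `j ∈ K` and otherwise `ℓ` is the first
element of `K` met when reading `j+1, j+2, …` cyclically. -/
def bdSet {n : ℕ} (j : Fin n) (K : Finset (Fin n)) : Finset (Fin n) :=
  K.erase (nextIn K j)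

/-- The basis vector `β^{(L)}_K` of the space `𝔅^{(L)}` of formal linear
combinations (modelled inside `ℝ^{Finset (Fin n)}`): the indicator of `K` if `K`
is nonfrozen in `S = {1,…,n} ∖ L`, and `0` if `K` is frozen. -/
noncomputable def betaV {n : ℕ} (L K : Finset (Fin n)) : Finset (Fin n) → ℝ :=
  if FrozenIn ((univ : Finset (Fin n)) \ L) K then 0 else Pi.single K 1

/-- The `S`-initial points of `K`: elements of `K` whose cyclic predecessor in `S`
does not lie in `K`. -/
def initPts {n : ℕ} (S K : Finset (Fin n)) : Finset (Fin n) :=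
  K.filter fun i => prevIn S i ∉ K

/-- `𝓛^{(L)}_K = Σ_{M ∈ {0,1}^t} (−1)^{1+|M|} β^{(L)}_{K_M}`, where `K_M` replaces the
chosen `S`-initial points of `K` by their cyclic predecessors in `S = {1,…,n} ∖ L`. -/
noncomputable def LElt {n : ℕ} (L K : Finset (Fin n)) : Finset (Fin n) → ℝ :=
  ∑ T ∈ (initPts ((univ : Finset (Fin n)) \ L) K).powerset,
    ((-1 : ℝ) ^ (1 + T.card)) •
      betaV L ((K \ T) ∪ T.image (prevIn ((univ : Finset (Fin n)) \ L)))

/-- The boundary map `∂_j : 𝔅^{(L)} → 𝔅^{(L∪{j})}`, the linear extension of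
`β^{(L)}_K ↦ β^{(L∪{j})}_{∂_j(K)}`. -/
noncomputable def bdMap {n : ℕ} (L : Finset (Fin n)) (j : Fin n)
    (x : Finset (Fin n) → ℝ) : Finset (Fin n) → ℝ :=
  ∑ K : Finset (Fin n), x K • betaV (insert j L) (bdSet j K)

/-- Iterated boundary maps: `bdComp L [j₁, …, jd] x` applies `∂_{j₁}` first (starting
from `𝔅^{(L)}`), then `∂_{j₂}`, etc. -/
noncomputable def bdComp {n : ℕ} :
    Finset (Fin n) → List (Fin n) → (Finset (Fin n) → ℝ) → (Finset (Fin n) → ℝ)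
  | _, [], x => x
  | L0, j :: js, x => bdComp (insert j L0) js (bdMap L0 j x)

set_option linter.unusedSectionVars false
open Fin.CommRing Fin.NatCast
section Aux
variable {n : ℕ} [NeZero n]

lemma val_one_of (hn : 2 ≤ n) : (1 : Fin n).val = 1 := by
  rw [Fin.val_one']; exact Nat.mod_eq_of_lt hn

lemma val_add_one (hn : 2 ≤ n) (x : Fin n) : (x + 1).val = (x.val + 1) % n := by
  rw [Fin.add_def, val_one_of hn]

lemma val_add_one_of_lt (hn : 2 ≤ n) {x : Fin n} (h : x.val + 1 < n) :
    (x + 1).val = x.val + 1 := by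
  rw [val_add_one hn, Nat.mod_eq_of_lt h]

lemma fin_sub_val (x y : Fin n) : (x - y).val = (n - y.val + x.val) % n := by
  rw [Fin.sub_def]

lemma fin_sub_one_val (hn : 2 ≤ n) {m : Fin n} (hm : m ≠ 0) :
    (m - 1).val = m.val - 1 := by
  have h1 : m.val ≠ 0 := fun h => hm (Fin.ext h)
  have h2 := m.isLt
  rw [fin_sub_val, val_one_of hn]
  have : n - 1 + m.val = n + (m.val - 1) := by omega
  rw [this, Nat.add_mod_left, Nat.mod_eq_of_lt (by omega)]

lemma fin_neg_one_val (hn : 2 ≤ n) : ((0 : Fin n) - 1).val = n - 1 := by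
  rw [fin_sub_val, val_one_of hn]
  simp [Nat.mod_eq_of_lt (show n - 1 + 0 < n by omega)]

end Aux

section Aux2
variable {n : ℕ} [NeZero n] {K J : Finset (Fin n)} {j : Fin n}

lemma nextIn_spec (hK : K.Nonempty) (j : Fin n) :
    ∃ m : Fin n, nextIn K j = j + m ∧ j + m ∈ K ∧ ∀ r, j + r ∈ K → m ≤ r := by
  obtain ⟨x, hx⟩ := hK
  have hne : (univ.filter fun r : Fin n => j + r ∈ K).Nonempty :=
    ⟨x - j, by simp [mem_filter, hx]⟩
  refine ⟨(univ.filter fun r : Fin n => j + r ∈ K).min' hne, ?_, ?_, ?_⟩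
  · rw [nextIn, dif_pos hne]
  · have := min'_mem _ hne
    simpa [mem_filter] using this
  · intro r hr
    exact min'_le _ _ (by simp [mem_filter, hr])

lemma nextIn_mem (hK : K.Nonempty) (j : Fin n) : nextIn K j ∈ K := by
  obtain ⟨m, h1, h2, _⟩ := nextIn_spec hK j
  rwa [h1]

lemma nextIn_self (hj : j ∈ K) : nextIn K j = j := by
  obtain ⟨m, h1, h2, h3⟩ := nextIn_spec ⟨j, hj⟩ j
  have h0 : m ≤ 0 := h3 0 (by simpa using hj)
  have : m = 0 := le_antisymm h0 (by simp [Fin.le_def])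
  rw [h1, this, add_zero]

lemma nextIn_succ (hn : 2 ≤ n) (hj : j ∉ K) (hK : K.Nonempty) :
    nextIn K (j + 1) = nextIn K j := by
  obtain ⟨m, h1, h2, h3⟩ := nextIn_spec hK j
  obtain ⟨m', h1', h2', h3'⟩ := nextIn_spec hK (j + 1)
  have hm0 : m ≠ 0 := by rintro rfl; rw [add_zero] at h2; exact hj h2
  have hmv : 1 ≤ m.val := by
    rcases Nat.eq_zero_or_pos m.val with h | h
    · exact absurd (Fin.ext h) hm0
    · exact h
  have hle1 : m ≤ m' + 1 := h3 _ (by rw [show j + (m' + 1) = j + 1 + m' by ring]; exact h2')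
  have hle2 : m' ≤ m - 1 := h3' _ (by rw [show j + 1 + (m - 1) = j + m by ring]; exact h2)
  have hsub : (m - 1).val = m.val - 1 := fin_sub_one_val hn hm0
  have hm'v : m'.val ≤ m.val - 1 := by rw [← hsub]; exact hle2
  have hmlt := m.isLt
  have hadd : (m' + 1).val = m'.val + 1 := val_add_one_of_lt hn (by omega)
  have : m.val = m'.val + 1 := by
    have := Fin.le_def.mp hle1
    rw [hadd] at this
    omega
  have hmm : m = m' + 1 := Fin.ext (by rw [hadd, this])
  rw [h1, h1', hmm]
  ring

lemma eq_of_nextIn_succ_self (hn : 2 ≤ n) (hj : j ∈ J) (h : nextIn J (j + 1) = j) :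
    ∀ x ∈ J, x = j := by
  obtain ⟨m', h1', h2', h3'⟩ := nextIn_spec ⟨j, hj⟩ (j + 1)
  have hm' : m' = -1 := by
    have heq : j + 1 + m' = j := by rw [← h1', h]
    have h2 : m' = j - (j + 1) := by rw [eq_sub_iff_add_eq, add_comm]; exact heq
    rw [h2]; ring
  have hval : m'.val = n - 1 := by
    rw [hm', show (-1 : Fin n) = 0 - 1 by ring, fin_neg_one_val hn]
  intro x hx
  have hr : j + 1 + (x - (j + 1)) ∈ J := by rwa [add_sub_cancel]
  have := Fin.le_def.mp (h3' _ hr)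
  have hlt := (x - (j + 1)).isLt
  have : (x - (j + 1)).val = m'.val := by omega
  have hxm : x - (j + 1) = m' := Fin.ext this
  have : x = j + 1 + m' := by rw [← hxm]; ring
  rw [this, hm']; ring

lemma bdSet_insert_self (hj : j ∉ K) : bdSet j (insert j K) = K := by
  rw [bdSet, nextIn_self (mem_insert_self j K), erase_insert hj]

end Aux2

section Aux3
variable {n : ℕ} [NeZero n] {S : Finset (Fin n)}

/-- exit points of `S`: in `S`, successor not in `S`. -/
def exits (S : Finset (Fin n)) : Finset (Fin n) :=
  univ.filter fun x => x ∈ S ∧ x + 1 ∉ S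

/-- entry points: not in `S`, successor in `S`. -/
def entries (S : Finset (Fin n)) : Finset (Fin n) :=
  univ.filter fun x => x ∉ S ∧ x + 1 ∈ S

lemma mem_exits {x : Fin n} : x ∈ exits S ↔ x ∈ S ∧ x + 1 ∉ S := by
  simp [exits]

lemma mem_entries {x : Fin n} : x ∈ entries S ↔ x ∉ S ∧ x + 1 ∈ S := by
  simp [entries]

lemma mem_cInterval {x i j : Fin n} :
    x ∈ cInterval i j ↔ (x - i).val ≤ (j - i).val := by
  simp [cInterval]

lemma exits_cInterval (hn : 2 ≤ n) (i j : Fin n) : exits (cInterval i j) ⊆ {j} := by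
  intro x hx
  rw [mem_exits, mem_cInterval, mem_cInterval] at hx
  obtain ⟨h1, h2⟩ := hx
  have he : x + 1 - i = (x - i) + 1 := by ring
  have hv : (x + 1 - i).val = ((x - i).val + 1) % n := by rw [he, val_add_one hn]
  have hlt := (x - i).isLt
  rcases Nat.lt_or_ge ((x - i).val + 1) n with h | h
  · rw [Nat.mod_eq_of_lt h] at hv
    have : (x - i).val = (j - i).val := by omega
    have : x - i = j - i := Fin.ext this
    have : x = j := by
      have := congrArg (· + i) this
      simpa [sub_add_cancel] using this
    simp [this]
  · have : (x - i).val + 1 = n := by omega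
    rw [this, Nat.mod_self] at hv
    exact absurd (by omega : (x + 1 - i).val ≤ (j - i).val) h2

lemma exits_card_eq_entries_card (S : Finset (Fin n)) :
    (exits S).card = (entries S).card := by
  have key : ∑ x : Fin n, ((if x ∈ S then (1:ℤ) else 0) - (if x + 1 ∈ S then (1:ℤ) else 0)) = 0 := by
    rw [Finset.sum_sub_distrib]
    have : ∑ x : Fin n, (if x + 1 ∈ S then (1:ℤ) else 0) = ∑ x : Fin n, (if x ∈ S then (1:ℤ) else 0) :=
      Fintype.sum_equiv (Equiv.addRight (1 : Fin n)) _ _ (fun x => rfl)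
    rw [this, sub_self]
  have split : ∀ x : Fin n,
      (if x ∈ S then (1:ℤ) else 0) - (if x + 1 ∈ S then (1:ℤ) else 0)
      = (if x ∈ S ∧ x + 1 ∉ S then (1:ℤ) else 0) - (if x ∉ S ∧ x + 1 ∈ S then (1:ℤ) else 0) := by
    intro x
    by_cases h1 : x ∈ S <;> by_cases h2 : x + 1 ∈ S <;> simp [h1, h2]
  rw [Finset.sum_congr rfl (fun x _ => split x), Finset.sum_sub_distrib] at key
  rw [Finset.sum_boole, Finset.sum_boole] at key
  have : ((univ.filter fun x : Fin n => x ∈ S ∧ x + 1 ∉ S).card : ℤ)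
      = ((univ.filter fun x : Fin n => x ∉ S ∧ x + 1 ∈ S).card : ℤ) := by omega
  have h2 : (univ.filter fun x : Fin n => x ∈ S ∧ x + 1 ∉ S).card
      = (univ.filter fun x : Fin n => x ∉ S ∧ x + 1 ∈ S).card := by exact_mod_cast this
  simpa [exits, entries] using h2

lemma eq_univ_of_no_exits (hx : ∀ x ∈ S, x + 1 ∈ S) (hS : S.Nonempty) : S = univ := by
  obtain ⟨y, hy⟩ := hS
  have key : ∀ m : ℕ, y + (m : Fin n) ∈ S := by
    intro m
    induction m with
    | zero => simpa using hy
    | succ m ih =>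
        have : ((m + 1 : ℕ) : Fin n) = (m : Fin n) + 1 := by push_cast; ring
        rw [this, ← add_assoc]
        exact hx _ ih
  apply Finset.eq_univ_of_forall
  intro x
  have := key (x - y).val
  rwa [Fin.cast_val_eq_self, add_sub_cancel] at this

lemma exits_nonempty (hS : S.Nonempty) (hSu : S ≠ univ) : (exits S).Nonempty := by
  by_contra h
  rw [Finset.not_nonempty_iff_eq_empty] at h
  apply hSu
  apply eq_univ_of_no_exits _ hS
  intro x hx
  by_contra hx1
  have : x ∈ exits S := mem_exits.mpr ⟨hx, hx1⟩
  simp [h] at this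

lemma isInterval_of_exits_card_le_one (hn : 2 ≤ n) (hS : S.Nonempty) (hSu : S ≠ univ)
    (h1 : (exits S).card ≤ 1) : ∃ i j : Fin n, S = cInterval i j := by
  have hne := exits_nonempty hS hSu
  have hcard : (exits S).card = 1 := le_antisymm h1 (Finset.card_pos.mpr hne)
  obtain ⟨e, he⟩ := Finset.card_eq_one.mp hcard
  have hecard : (entries S).card = 1 := by rw [← exits_card_eq_entries_card, hcard]
  obtain ⟨y, hy⟩ := Finset.card_eq_one.mp hecard
  have heS : e ∈ S ∧ e + 1 ∉ S := mem_exits.mp (he ▸ Finset.mem_singleton_self e)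
  have hyS : y ∉ S ∧ y + 1 ∈ S := mem_entries.mp (hy ▸ Finset.mem_singleton_self y)
  set b := y + 1 with hb
  set d := (e - b).val with hd
  have hdlt : d < n := (e - b).isLt
  have key : ∀ u : ℕ, u < n → (b + (u : Fin n) ∈ S ↔ u ≤ d) := by
    intro u hu
    induction u with
    | zero => simpa using hyS.2
    | succ u ih =>
        have hu' : u < n := by omega
        have ih := ih hu'
        have hcast : ((u : ℕ) : Fin n).val = u := Fin.val_cast_of_lt hu'
        have hnext : b + ((u + 1 : ℕ) : Fin n) = (b + (u : ℕ)) + 1 := by push_cast; ring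
        rw [hnext]
        rcases Nat.lt_or_ge u d with hud | hud
        · -- u < d : b+u ∈ S and b+u ≠ e, so b+u+1 ∈ S
          have hxin : b + (u : ℕ) ∈ S := ih.mpr (Nat.le_of_lt hud)
          have hxne : b + (u : ℕ) ≠ e := by
            intro hcontra
            have : ((u : ℕ) : Fin n) = e - b := by
              rw [← hcontra]; rw [add_sub_cancel_left]
            have : u = d := by rw [hd, ← this, hcast]
            omega
          have : b + (u : ℕ) + 1 ∈ S := by
            by_contra hno
            have : b + (u : ℕ) ∈ exits S := mem_exits.mpr ⟨hxin, hno⟩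
            rw [he, Finset.mem_singleton] at this
            exact hxne this
          exact ⟨fun _ => by omega, fun _ => this⟩
        · rcases Nat.eq_or_lt_of_le hud with hud' | hud'
          · -- u = d : b+u = e, so b+u+1 ∉ S
            have hxe : b + (u : ℕ) = e := by
              have : ((u : ℕ) : Fin n) = e - b := Fin.ext (by rw [hcast, ← hd, hud'])
              rw [this, add_sub_cancel]
            rw [hxe]
            exact ⟨fun h => absurd h heS.2, fun h => by omega⟩
          · -- u > d : b+u ∉ S, and b+u+1 ∉ S
            have hxout : b + (u : ℕ) ∉ S := fun h => absurd (ih.mp h) (by omega)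
            have : b + (u : ℕ) + 1 ∉ S := by
              intro hcontra
              have hent : b + (u : ℕ) ∈ entries S := mem_entries.mpr ⟨hxout, hcontra⟩
              rw [hy, Finset.mem_singleton] at hent
              have : b + (u : ℕ) + 1 = b := by rw [hent, hb]
              have h0 : b + ((u + 1 : ℕ) : Fin n) = b + 0 := by
                rw [hnext, this, add_zero]
              have : ((u + 1 : ℕ) : Fin n) = 0 := by
                exact add_left_cancel h0
              have := congrArg Fin.val this
              rw [Fin.val_cast_of_lt (by omega : u + 1 < n)] at this
              simp at this
            exact ⟨fun h => absurd h this, fun h => by omega⟩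
  refine ⟨b, e, ?_⟩
  ext x
  rw [mem_cInterval]
  have hu : (x - b).val < n := (x - b).isLt
  have hx : x = b + ((x - b).val : Fin n) := by
    rw [Fin.cast_val_eq_self, add_sub_cancel]
  rw [← hd]
  constructor
  · intro hxS
    exact (key _ hu).mp (by rwa [← hx])
  · intro hle
    rw [hx]
    exact (key _ hu).mpr hle

end Aux3

section Aux4
variable {n : ℕ} [NeZero n] {S K J : Finset (Fin n)} {j : Fin n}

lemma frozenIn_univ_iff : FrozenIn univ J ↔ ∃ i i' : Fin n, J = cInterval i i' := by
  simp [FrozenIn, univ_inter]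

lemma frozenIn_erase_cases (hj : j ∉ K) (h : FrozenIn (univ.erase j) K) :
    (∃ i i' : Fin n, K = cInterval i i') ∨ (∃ i i' : Fin n, insert j K = cInterval i i') := by
  obtain ⟨i, i', hK⟩ := h
  have heq : (univ.erase j) ∩ cInterval i i' = (cInterval i i').erase j := by
    ext x
    simp only [mem_inter, mem_erase, mem_univ, and_true]
  rw [heq] at hK
  by_cases hjc : j ∈ cInterval i i'
  · right; exact ⟨i, i', by rw [hK, insert_erase hjc]⟩
  · left; exact ⟨i, i', by rw [hK, erase_eq_of_notMem hjc]⟩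

lemma not_isInterval_of_two_exits (hn : 2 ≤ n) (h2 : 2 ≤ (exits S).card) :
    ¬ ∃ i i' : Fin n, S = cInterval i i' := by
  rintro ⟨i, i', rfl⟩
  have := Finset.card_le_card (exits_cInterval hn i i')
  rw [card_singleton] at this
  omega

lemma two_exits_of_not_interval (hn : 2 ≤ n) (hS : S.Nonempty) (hSu : S ≠ univ)
    (h : ¬ ∃ i i' : Fin n, S = cInterval i i') : 2 ≤ (exits S).card := by
  by_contra hc
  exact h (isInterval_of_exits_card_le_one hn hS hSu (by omega))

lemma not_frozen_erase (hn : 2 ≤ n) (hj : j ∉ K)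
    (h1 : 2 ≤ (exits K).card) (h2 : 2 ≤ (exits (insert j K)).card) :
    ¬ FrozenIn (univ.erase j) K := by
  intro h
  rcases frozenIn_erase_cases hj h with h' | h'
  · exact not_isInterval_of_two_exits hn h1 h'
  · exact not_isInterval_of_two_exits hn h2 h'

end Aux4

lemma bdSet_def {n : ℕ} (j : Fin n) (K : Finset (Fin n)) :
    bdSet j K = K.erase (nextIn K j) := rfl


/-- the boundary map `∂ = ∂_1 + ⋯ + ∂_n` on `𝔅^{(∅)}` is injective:
if the weights `c` on nonfrozen `k`-subsets satisfy, for every `j` and every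
nonfrozen `(k−1)`-subset `K` of `{1,…,n}∖{j}`, `Σ_{∂_j(J) = K} c_J = 0`, then
`c = 0`. -/
theorem stmt11 {n k : ℕ} (hk : 3 ≤ k) (hkn : k ≤ n - 2)
    (c : Finset (Fin n) → ℝ)
    (hbd : ∀ j : Fin n, ∀ K : Finset (Fin n),
      K ⊆ univ.erase j → K.card = k - 1 → ¬ FrozenIn (univ.erase j) K →
      ∑ J ∈ (powersetCard k (univ : Finset (Fin n))).filter
          (fun J => ¬ FrozenIn univ J ∧ bdSet j J = K), c J = 0) :
    ∀ J : Finset (Fin n), J.card = k → ¬ FrozenIn univ J → c J = 0 := by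
  intro J hJcard hJnf
  have hn5 : 5 ≤ n := by omega
  haveI : NeZero n := ⟨by omega⟩
  have hn : 2 ≤ n := by omega
  have hsucc_ne : ∀ a : Fin n, a + 1 ≠ a := by
    intro a h
    have h1 : (1 : Fin n) = 0 := by
      have := congrArg (· - a) h
      simpa using this
    have h2 := congrArg Fin.val h1
    rw [val_one_of hn] at h2
    simp at h2
  have hJne : J.Nonempty := card_pos.mp (by omega)
  have hJu : J ≠ univ := by
    intro h
    have := congrArg Finset.card h
    rw [hJcard, card_univ, Fintype.card_fin] at this
    omega
  have hJint : ¬ ∃ i i' : Fin n, J = cInterval i i' := fun h => hJnf (frozenIn_univ_iff.mpr h)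
  have hJex : 2 ≤ (exits J).card := two_exits_of_not_interval hn hJne hJu hJint
  by_cases hA : ∃ j ∈ J, j + 1 ∈ J
  · obtain ⟨j, hjJ, hj1⟩ := hA
    set K := J.erase j with hK
    have hjK : j ∉ K := notMem_erase j J
    have hins : insert j K = J := insert_erase hjJ
    have hKcard : K.card = k - 1 := by rw [hK, card_erase_of_mem hjJ, hJcard]
    have hKsub : K ⊆ univ.erase j := erase_subset_erase j (subset_univ J)
    have hKex : 2 ≤ (exits K).card := by
      refine le_trans hJex (card_le_card ?_)
      intro x hx
      rw [mem_exits] at hx ⊢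
      obtain ⟨hx1, hx2⟩ := hx
      have hxj : x ≠ j := by rintro rfl; exact hx2 hj1
      exact ⟨mem_erase.mpr ⟨hxj, hx1⟩, fun h => hx2 (mem_of_mem_erase h)⟩
    have hKnf : ¬ FrozenIn (univ.erase j) K :=
      not_frozen_erase hn hjK hKex (by rwa [hins])
    have hsum := hbd j K hKsub hKcard hKnf
    have hfib : (powersetCard k (univ : Finset (Fin n))).filter
        (fun J' => ¬ FrozenIn univ J' ∧ bdSet j J' = K) = {J} := by
      ext J'
      simp only [mem_filter, mem_powersetCard_univ, mem_singleton]
      constructor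
      · rintro ⟨hc, hnf, hbdJ'⟩
        have hJ'ne : J'.Nonempty := card_pos.mp (by omega)
        by_cases hjJ' : j ∈ J'
        · rw [bdSet_def, nextIn_self hjJ'] at hbdJ'
          rw [← insert_erase hjJ', hbdJ', hins]
        · exfalso
          have hj1K : j + 1 ∈ K := mem_erase.mpr ⟨hsucc_ne j, hj1⟩
          have hj1J' : j + 1 ∈ J' := by
            rw [← hbdJ'] at hj1K
            exact mem_of_mem_erase hj1K
          have hnx : nextIn J' j = j + 1 := by
            rw [← nextIn_succ hn hjJ' hJ'ne, nextIn_self hj1J']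
          rw [bdSet_def, hnx] at hbdJ'
          rw [← hbdJ'] at hj1K
          exact notMem_erase _ _ hj1K
      · rintro rfl
        exact ⟨hJcard, hJnf, by rw [bdSet_def, nextIn_self hjJ, hK]⟩
    rw [hfib, sum_singleton] at hsum
    exact hsum
  · push_neg at hA
    obtain ⟨j, hjJ⟩ := hJne
    have hj1J : j + 1 ∉ J := hA j hjJ
    set K := J.erase j with hK
    have hjK : j ∉ K := notMem_erase j J
    have hins : insert j K = J := insert_erase hjJ
    have hKcard : K.card = k - 1 := by rw [hK, card_erase_of_mem hjJ, hJcard]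
    have hKsub : K ⊆ univ.erase j := erase_subset_erase j (subset_univ J)
    have hj1K : j + 1 ∉ K := fun h => hj1J (mem_of_mem_erase h)
    have hKsub1 : K ⊆ univ.erase (j + 1) := fun x hx =>
      mem_erase.mpr ⟨fun h => hj1K (h ▸ hx), mem_univ x⟩
    have hKJ : K ⊆ J := erase_subset j J
    have hKex : 2 ≤ (exits K).card := by
      have hsub : K ⊆ exits K := by
        intro x hx
        rw [mem_exits]
        exact ⟨hx, fun h => hA x (hKJ hx) (hKJ h)⟩
      have := card_le_card hsub
      omega
    have hKex1 : 2 ≤ (exits (insert (j + 1) K)).card := by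
      have hsub : K ⊆ exits (insert (j + 1) K) := by
        intro x hx
        rw [mem_exits]
        refine ⟨mem_insert_of_mem hx, fun h => ?_⟩
        rcases mem_insert.mp h with h' | h'
        · exact hjK (by rwa [add_left_injective 1 h'] at hx)
        · exact hA x (hKJ hx) (hKJ h')
      have := card_le_card hsub
      omega
    have hKnfj : ¬ FrozenIn (univ.erase j) K :=
      not_frozen_erase hn hjK hKex (by rwa [hins])
    have hKnfj1 : ¬ FrozenIn (univ.erase (j + 1)) K :=
      not_frozen_erase hn hj1K hKex hKex1
    have hsumj := hbd j K hKsub hKcard hKnfj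
    have hsumj1 := hbd (j + 1) K hKsub1 hKcard hKnfj1
    have hnotmem : ∀ J' : Finset (Fin n), J'.card = k → j ∈ J' → bdSet (j + 1) J' ≠ K := by
      intro J' hc hjJ' hbdJ'
      have hl : nextIn J' (j + 1) = j := by
        by_contra hne
        have hmem : j ∈ bdSet (j + 1) J' := by
          rw [bdSet_def]
          exact mem_erase.mpr ⟨fun h => hne h.symm, hjJ'⟩
        rw [hbdJ'] at hmem
        exact hjK hmem
      have hall := eq_of_nextIn_succ_self hn hjJ' hl
      have hsub : J' ⊆ {j} := fun x hx => mem_singleton.mpr (hall x hx)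
      have := card_le_card hsub
      rw [hc, card_singleton] at this
      omega
    have hfib : (powersetCard k (univ : Finset (Fin n))).filter
        (fun J' => ¬ FrozenIn univ J' ∧ bdSet j J' = K)
        = insert J ((powersetCard k (univ : Finset (Fin n))).filter
        (fun J' => ¬ FrozenIn univ J' ∧ bdSet (j + 1) J' = K)) := by
      ext J'
      simp only [mem_filter, mem_powersetCard_univ, mem_insert]
      constructor
      · rintro ⟨hc, hnf, hbdJ'⟩
        by_cases hjJ' : j ∈ J'
        · left
          rw [bdSet_def, nextIn_self hjJ'] at hbdJ'
          rw [← insert_erase hjJ', hbdJ', hins]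
        · right
          have hJ'ne : J'.Nonempty := card_pos.mp (by omega)
          refine ⟨hc, hnf, ?_⟩
          rw [bdSet_def, nextIn_succ hn hjJ' hJ'ne, ← bdSet_def, hbdJ']
      · rintro (rfl | ⟨hc, hnf, hbdJ'⟩)
        · exact ⟨hJcard, hJnf, by rw [bdSet_def, nextIn_self hjJ, hK]⟩
        · have hjJ' : j ∉ J' := fun h => hnotmem J' hc h hbdJ'
          have hJ'ne : J'.Nonempty := card_pos.mp (by omega)
          refine ⟨hc, hnf, ?_⟩
          rw [bdSet_def, ← nextIn_succ hn hjJ' hJ'ne, ← bdSet_def, hbdJ']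
    have hJnotin : J ∉ (powersetCard k (univ : Finset (Fin n))).filter
        (fun J' => ¬ FrozenIn univ J' ∧ bdSet (j + 1) J' = K) := by
      simp only [mem_filter, mem_powersetCard_univ]
      rintro ⟨hc, -, hbdJ'⟩
      exact hnotmem J hc hjJ hbdJ'
    rw [hfib, sum_insert hJnotin, hsumj1, add_zero] at hsumj
    exact hsumj
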